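/- Let G be a word-hyperbolic group with finite generating set A and word metric d, and let H, F ≤ G be quasiconvex subgroups such that F is conjugacy separated from H in G. Then there is an integer constant K₁ = K₁(H, F, G, A) > 0 with the following property: if g ∈ G is a shortest element (with respect to the word length |·|_A) in the double coset HgF, f ∈ F is arbitrary, and h ∈ H is such that hgf is a shortest element in the coset Hgf, then |h|_A ≤ K₁. -/
import Mathlib


variable {G : Type*} [Group G]

/-- The set of lengths of words in the alphabet `A ∪ A⁻¹` representing `g`. -/
def wordLengthSet (A : Finset G) (g : G) : Set ℕ :=
  {n | ∃ l : List G, l.length = n ∧ (∀ x ∈ l, x ∈ A ∨ x⁻¹ ∈ A) ∧ l.prod = g}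

/-- The word length of `g` with respect to the generating set `A`. -/
noncomputable def wl (A : Finset G) (g : G) : ℕ :=
  sInf (wordLengthSet A g)

/-- The word metric on `G` (distance between vertices of the Cayley graph `Γ(G,A)`). -/
noncomputable def wdist (A : Finset G) (g h : G) : ℕ :=
  wl A (g⁻¹ * h)

/-- A (discrete) geodesic from `x` to `y` in the Cayley graph `Γ(G,A)`. -/
def IsGeodesic (A : Finset G) (γ : ℕ → G) (x y : G) : Prop :=
  γ 0 = x ∧ γ (wdist A x y) = y ∧
    ∀ i j : ℕ, i ≤ wdist A x y → j ≤ wdist A x y →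
      wdist A (γ i) (γ j) = Nat.dist i j

/-- The Gromov product `(x,y)_z` in the Cayley graph `Γ(G,A)`. -/
noncomputable def gp (A : Finset G) (z x y : G) : ℝ :=
  ((wdist A z x : ℝ) + (wdist A z y : ℝ) - (wdist A x y : ℝ)) / 2

/-- All geodesic triangles in `Γ(G,A)` are `δ`-thin: each side is contained in the
closed `δ`-neighbourhood of the union of the other two sides. -/
def IsThin (A : Finset G) (δ : ℝ) : Prop :=
  ∀ x y z : G, ∀ γ₁ γ₂ γ₃ : ℕ → G,
    IsGeodesic A γ₁ x y → IsGeodesic A γ₂ y z → IsGeodesic A γ₃ x z →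
    ∀ i, i ≤ wdist A x y →
      (∃ j, j ≤ wdist A y z ∧ (wdist A (γ₁ i) (γ₂ j) : ℝ) ≤ δ) ∨
      (∃ j, j ≤ wdist A x z ∧ (wdist A (γ₁ i) (γ₃ j) : ℝ) ≤ δ)

/-- All geodesic triangles in `Γ(G,A)` are `δ`-trim: points on two sides of a triangle
which are equidistant from the common vertex, up to the Gromov product of the two other
vertices at that vertex, are `δ`-close. -/
def TrimCayley (A : Finset G) (δ : ℝ) : Prop :=
  ∀ x y z : G, ∀ γ₁ γ₂ : ℕ → G, IsGeodesic A γ₁ z x → IsGeodesic A γ₂ z y →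
    ∀ i : ℕ, (i : ℝ) ≤ gp A z x y → (wdist A (γ₁ i) (γ₂ i) : ℝ) ≤ δ

/-- `G` is word-hyperbolic: it is finitely generated and for every finite generating
set `A` there is `δ ≥ 0` such that all geodesic triangles in `Γ(G,A)` are `δ`-thin. -/
def WordHyperbolic (G : Type*) [Group G] : Prop :=
  (∃ A : Finset G, Subgroup.closure (A : Set G) = ⊤) ∧
    ∀ A : Finset G, Subgroup.closure (A : Set G) = ⊤ →
      ∃ δ : ℝ, 0 ≤ δ ∧ IsThin A δ

/-- `G` is virtually cyclic (elementary). -/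
def VirtuallyCyclic (G : Type*) [Group G] : Prop :=
  ∃ H : Subgroup G, IsCyclic H ∧ H.FiniteIndex

/-- `H` is a quasiconvex subgroup of `G`: for every finite generating set `A` there is
`ε ≥ 0` such that every geodesic of `Γ(G,A)` with both endpoints in `H` stays in the
`ε`-neighbourhood of `H`. -/
def QCSubgroup (H : Subgroup G) : Prop :=
  ∀ A : Finset G, Subgroup.closure (A : Set G) = ⊤ →
    ∃ ε : ℝ, 0 ≤ ε ∧ ∀ h₁ h₂ : G, h₁ ∈ H → h₂ ∈ H →
      ∀ γ : ℕ → G, IsGeodesic A γ h₁ h₂ →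
        ∀ i, i ≤ wdist A h₁ h₂ → ∃ h ∈ H, (wdist A (γ i) h : ℝ) ≤ ε

/-- `F` is conjugacy separated from `H` in `G`: `g⁻¹Hg ∩ F = 1` for every `g ∈ G`. -/
def ConjSeparated (H F : Subgroup G) : Prop :=
  ∀ g x : G, x ∈ F → g * x * g⁻¹ ∈ H → x = 1

section Toolkit

variable {A : Finset G}

lemma wl_le {g : G} {l : List G} (hl : ∀ x ∈ l, x ∈ A ∨ x⁻¹ ∈ A) (hp : l.prod = g) :
    wl A g ≤ l.length := Nat.sInf_le ⟨l, rfl, hl, hp⟩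

lemma wordLengthSet_nonempty (hA : Subgroup.closure (A : Set G) = ⊤) (g : G) :
    (wordLengthSet A g).Nonempty := by
  have hg : g ∈ (Subgroup.closure (A : Set G)).toSubmonoid := by
    rw [hA]; trivial
  rw [Subgroup.closure_toSubmonoid] at hg
  obtain ⟨l, hl, hp⟩ := Submonoid.exists_list_of_mem_closure hg
  exact ⟨l.length, l, rfl, fun x hx => by
    rcases hl x hx with h | h
    · exact Or.inl h
    · exact Or.inr (Set.mem_inv.mp h), hp⟩

lemma exists_min_word (hA : Subgroup.closure (A : Set G) = ⊤) (g : G) :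
    ∃ l : List G, l.length = wl A g ∧ (∀ x ∈ l, x ∈ A ∨ x⁻¹ ∈ A) ∧ l.prod = g :=
  Nat.sInf_mem (wordLengthSet_nonempty hA g)

lemma wl_one : wl A (1 : G) = 0 :=
  Nat.le_zero.mp (wl_le (l := []) (by simp) rfl)

lemma eq_one_of_wl_eq_zero (hA : Subgroup.closure (A : Set G) = ⊤) {g : G}
    (h : wl A g = 0) : g = 1 := by
  obtain ⟨l, hlen, -, hp⟩ := exists_min_word hA g
  rw [h, List.length_eq_zero_iff] at hlen
  rw [← hp, hlen, List.prod_nil]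

lemma wl_mul_le (hA : Subgroup.closure (A : Set G) = ⊤) (a b : G) :
    wl A (a * b) ≤ wl A a + wl A b := by
  obtain ⟨l₁, h1, hl1, hp1⟩ := exists_min_word hA a
  obtain ⟨l₂, h2, hl2, hp2⟩ := exists_min_word hA b
  calc wl A (a * b) ≤ (l₁ ++ l₂).length := wl_le
        (fun x hx => by rcases List.mem_append.mp hx with h | h
                        exacts [hl1 x h, hl2 x h])
        (by rw [List.prod_append, hp1, hp2])
    _ = wl A a + wl A b := by rw [List.length_append, h1, h2]

lemma wl_inv_le (hA : Subgroup.closure (A : Set G) = ⊤) (a : G) :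
    wl A a⁻¹ ≤ wl A a := by
  obtain ⟨l, hlen, hl, hp⟩ := exists_min_word hA a
  calc wl A a⁻¹ ≤ ((l.map fun x => x⁻¹).reverse).length := wl_le
        (fun x hx => by
          rw [List.mem_reverse, List.mem_map] at hx
          obtain ⟨y, hy, rfl⟩ := hx
          rcases hl y hy with h | h
          · exact Or.inr (by rwa [inv_inv])
          · exact Or.inl h)
        (by rw [← List.prod_inv_reverse, hp])
    _ = wl A a := by rw [List.length_reverse, List.length_map, hlen]

lemma wl_inv (hA : Subgroup.closure (A : Set G) = ⊤) (a : G) : wl A a⁻¹ = wl A a :=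
  le_antisymm (wl_inv_le hA a) (by simpa using wl_inv_le hA a⁻¹)

lemma wdist_self (x : G) : wdist A x x = 0 := by
  simp [wdist, wl_one]

lemma wdist_comm (hA : Subgroup.closure (A : Set G) = ⊤) (x y : G) :
    wdist A x y = wdist A y x := by
  unfold wdist
  rw [← wl_inv hA (y⁻¹ * x)]; congr 1; group

lemma wdist_triangle (hA : Subgroup.closure (A : Set G) = ⊤) (x y z : G) :
    wdist A x z ≤ wdist A x y + wdist A y z := by
  have : x⁻¹ * z = (x⁻¹ * y) * (y⁻¹ * z) := by group
  unfold wdist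
  rw [this]; exact wl_mul_le hA _ _

lemma wdist_mul_left (a x y : G) : wdist A (a * x) (a * y) = wdist A x y := by
  unfold wdist; congr 1; group

lemma wdist_one_left (x : G) : wdist A 1 x = wl A x := by
  unfold wdist; rw [inv_one, one_mul]

lemma wdist_one_right (hA : Subgroup.closure (A : Set G) = ⊤) (x : G) :
    wdist A x 1 = wl A x := by
  unfold wdist; rw [mul_one, wl_inv hA]

lemma IsGeodesic.mul_left {γ : ℕ → G} {x y : G} (h : IsGeodesic A γ x y) (a : G) :
    IsGeodesic A (fun n => a * γ n) (a * x) (a * y) := by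
  obtain ⟨h0, h1, h2⟩ := h
  refine ⟨by show a * γ 0 = a * x; rw [h0], ?_, ?_⟩
  · show a * γ (wdist A (a*x) (a*y)) = a * y
    rw [wdist_mul_left, h1]
  · intro i j hi hj
    rw [wdist_mul_left] at hi hj
    show wdist A (a * γ i) (a * γ j) = _
    rw [wdist_mul_left]
    exact h2 i j hi hj

lemma wdist_mul_right_self (x p : G) : wdist A x (x * p) = wl A p := by
  unfold wdist; rw [inv_mul_cancel_left]

lemma exists_geodesic (hA : Subgroup.closure (A : Set G) = ⊤) (x y : G) :
    ∃ γ : ℕ → G, IsGeodesic A γ x y := by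
  obtain ⟨l, hlen, hl, hp⟩ := exists_min_word hA (x⁻¹ * y)
  have hn : wdist A x y = l.length := hlen.symm
  have hy : x * l.prod = y := by rw [hp]; group
  have key : ∀ i j : ℕ, i ≤ j → j ≤ l.length →
      wdist A (x * (l.take i).prod) (x * (l.take j).prod) = j - i := by
    intro i j hij hjl
    have hup : wdist A (x * (l.take i).prod) (x * (l.take j).prod) ≤ j - i := by
      rw [wdist_mul_left]
      have hdecomp : l.take j = l.take i ++ (l.drop i).take (j - i) := by
        rw [← List.take_add, Nat.add_sub_cancel' hij]
      have hprod : ((l.take i).prod)⁻¹ * (l.take j).prod = ((l.drop i).take (j - i)).prod := by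
        rw [hdecomp, List.prod_append]; group
      unfold wdist
      rw [hprod]
      calc wl A _ ≤ ((l.drop i).take (j-i)).length :=
            wl_le (fun z hz => hl z (List.mem_of_mem_drop (List.mem_of_mem_take hz))) rfl
        _ ≤ j - i := by simp [List.length_take]
    have hxi : wdist A x (x * (l.take i).prod) ≤ i := by
      rw [wdist_mul_right_self]
      calc wl A _ ≤ (l.take i).length := wl_le (fun z hz => hl z (List.mem_of_mem_take hz)) rfl
        _ ≤ i := by simp [List.length_take]
    have hyj : wdist A (x * (l.take j).prod) y ≤ l.length - j := by
      have : wdist A (x * (l.take j).prod) y = wl A ((l.take j).prod⁻¹ * l.prod) := by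
        unfold wdist; rw [← hy]; congr 1; group
      rw [this]
      have hprod : ((l.take j).prod)⁻¹ * l.prod = (l.drop j).prod := by
        have hdec : l.prod = (l.take j).prod * (l.drop j).prod := by
          rw [← List.prod_append, List.take_append_drop]
        rw [hdec]; group
      rw [hprod]
      calc wl A _ ≤ (l.drop j).length := wl_le (fun z hz => hl z (List.mem_of_mem_drop hz)) rfl
        _ ≤ l.length - j := by simp [List.length_drop]
    have hlow := wdist_triangle hA x (x * (l.take i).prod) y
    have hlow2 := wdist_triangle hA (x * (l.take i).prod) (x * (l.take j).prod) y
    rw [hn] at hlow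
    omega
  refine ⟨fun i => x * (l.take i).prod, by simp, ?_, ?_⟩
  · show x * (l.take (wdist A x y)).prod = y
    rw [hn, List.take_length, hy]
  · intro i j hi hj
    rw [hn] at hi hj
    show wdist A (x * (l.take i).prod) (x * (l.take j).prod) = _
    rcases le_total i j with hij | hij
    · rw [key i j hij hj, Nat.dist_eq_sub_of_le hij]
    · rw [wdist_comm hA, key j i hij hi, Nat.dist_eq_sub_of_le_right hij]

lemma ball_finite (hA : Subgroup.closure (A : Set G) = ⊤) (n : ℕ) :
    {g : G | wl A g ≤ n}.Finite := by
  induction n with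
  | zero =>
    refine (Set.finite_singleton (1 : G)).subset fun g hg => ?_
    simp only [Set.mem_setOf_eq, Nat.le_zero] at hg
    simp [eq_one_of_wl_eq_zero hA hg]
  | succ n ih =>
    have hSfin : (insert (1:G) ((A : Set G) ∪ (A : Set G)⁻¹)).Finite :=
      (A.finite_toSet.union A.finite_toSet.inv).insert 1
    have hsub : {g : G | wl A g ≤ n + 1} ⊆ (fun p : G × G => p.1 * p.2) ''
        ({g : G | wl A g ≤ n} ×ˢ insert (1:G) ((A : Set G) ∪ (A : Set G)⁻¹)) := by
      intro g hg
      simp only [Set.mem_setOf_eq] at hg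
      obtain ⟨l, hlen, hl, hp⟩ := exists_min_word hA g
      rcases List.eq_nil_or_concat' l with rfl | ⟨l', a, rfl⟩
      · refine ⟨(g, 1), ?_, by simp⟩
        simp only [Set.mem_prod, Set.mem_setOf_eq]
        refine ⟨?_, Set.mem_insert 1 _⟩
        simp only [← hp, List.prod_nil, wl_one]; omega
      · refine ⟨(l'.prod, a), ?_, by rw [← hp, List.prod_append, List.prod_cons, List.prod_nil, mul_one]⟩
        simp only [Set.mem_prod, Set.mem_setOf_eq, Set.mem_insert_iff,
          Set.mem_union, Finset.mem_coe, Set.mem_inv]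
        constructor
        · have : wl A l'.prod ≤ l'.length :=
            wl_le (fun z hz => hl z (List.mem_append_left _ hz)) rfl
          have hlen' : l'.length + 1 = wl A g := by
            simpa using hlen
          omega
        · rcases hl a (List.mem_append_right _ (List.mem_singleton_self a)) with h | h
          · exact Or.inr (Or.inl h)
          · exact Or.inr (Or.inr h)
    exact ((ih.prod hSfin).image _).subset hsub

end Toolkit

section Main

variable {A : Finset G}

lemma main_claim (hA : Subgroup.closure (A : Set G) = ⊤) {H F : Subgroup G}
    {δ εH εF : ℝ}
    (hthin : IsThin A δ)
    (qcH : ∀ h₁ h₂ : G, h₁ ∈ H → h₂ ∈ H →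
      ∀ γ : ℕ → G, IsGeodesic A γ h₁ h₂ →
        ∀ i, i ≤ wdist A h₁ h₂ → ∃ h ∈ H, (wdist A (γ i) h : ℝ) ≤ εH)
    (qcF : ∀ h₁ h₂ : G, h₁ ∈ F → h₂ ∈ F →
      ∀ γ : ℕ → G, IsGeodesic A γ h₁ h₂ →
        ∀ i, i ≤ wdist A h₁ h₂ → ∃ h ∈ F, (wdist A (γ i) h : ℝ) ≤ εF)
    {D E : ℕ} (hD : δ ≤ (D : ℝ)) (hEH : εH ≤ (E : ℝ)) (hEF : εF ≤ (E : ℝ))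
    {g : G} (hg_short : ∀ h ∈ H, ∀ f ∈ F, wl A g ≤ wl A (h * g * f))
    {f : G} (hf : f ∈ F) {h : G} (hh : h ∈ H)
    (hmin : ∀ h' ∈ H, wl A (h * (g * f)) ≤ wl A (h' * (g * f)))
    (i : ℕ) (hi1 : E + 4*D + 1 ≤ i) (hi2 : i + E + 2*D + 1 ≤ wl A h) :
    ∃ a b c : G, a ∈ H ∧ b ∈ F ∧ wl A c ≤ 2*E + 2*D ∧
      a * c = h * (g * b) ∧
      wl A h ≤ wl A a + i + E ∧ wl A a + i ≤ wl A h + E := by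
  have hwd1 : wdist A h 1 = wl A h := wdist_one_right hA h
  have hile : i ≤ wdist A h 1 := by omega
  -- geodesics
  obtain ⟨γ₁, hγ₁⟩ := exists_geodesic hA h 1
  obtain ⟨γ₂, hγ₂⟩ := exists_geodesic hA 1 (h * (g * f))
  obtain ⟨σ, hσ⟩ := exists_geodesic hA 1 (g * f)
  have hγ₃ : IsGeodesic A (fun n => h * σ n) h (h * (g * f)) := by
    have := hσ.mul_left h
    rwa [mul_one] at this
  obtain ⟨τ, hτ⟩ := exists_geodesic hA 1 g
  obtain ⟨ρ', hρ'⟩ := exists_geodesic hA f 1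
  have hρ : IsGeodesic A (fun n => g * ρ' n) (g * f) g := by
    have := hρ'.mul_left g
    rwa [mul_one] at this
  -- the point p_i = γ₁ i and its H-approximation
  obtain ⟨a, haH, haε⟩ := qcH h 1 hh (one_mem H) γ₁ hγ₁ i hile
  have haE : wdist A (γ₁ i) a ≤ E := by exact_mod_cast haε.trans hEH
  -- basic distances along γ₁
  have dhp : wdist A h (γ₁ i) = i := by
    have := hγ₁.2.2 0 i (Nat.zero_le _) hile
    rwa [hγ₁.1, Nat.dist_zero_left] at this
  have dp1 : wdist A (γ₁ i) 1 = wl A h - i := by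
    have := hγ₁.2.2 i (wdist A h 1) hile le_rfl
    rwa [hγ₁.2.1, Nat.dist_eq_sub_of_le hile, hwd1] at this
  -- length bounds for a
  have hb1 : wl A h ≤ wl A a + i + E := by
    have t1 := wdist_triangle hA (γ₁ i) a 1
    have t2 : wdist A a 1 = wl A a := wdist_one_right hA a
    have t3 := wdist_triangle hA (γ₁ i) (γ₁ i) 1
    omega
  have hb2 : wl A a + i ≤ wl A h + E := by
    have t1 := wdist_triangle hA 1 (γ₁ i) a
    have t2 : wdist A 1 a = wl A a := wdist_one_left a
    have t3 : wdist A 1 (γ₁ i) = wl A h - i := by rw [wdist_comm hA]; exact dp1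
    have t4 : wdist A (γ₁ i) a = wdist A (γ₁ i) a := rfl
    omega
  -- apply thinness to the triangle (h, 1, h*(g*f))
  rcases hthin h 1 (h * (g * f)) γ₁ γ₂ (fun n => h * σ n) hγ₁ hγ₂ hγ₃ i hile with
    ⟨j, hj, hdA⟩ | ⟨j, hj, hdB⟩
  · -- Case A : γ₁ i is close to the side from 1 to h*(g*f); contradiction
    exfalso
    have hdAD : wdist A (γ₁ i) (γ₂ j) ≤ D := by exact_mod_cast hdA.trans hD
    have d1j : wdist A 1 (γ₂ j) = j := by
      have := hγ₂.2.2 0 j (Nat.zero_le _) hj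
      rwa [hγ₂.1, Nat.dist_zero_left] at this
    have djz : wdist A (γ₂ j) (h * (g * f)) = wdist A 1 (h * (g * f)) - j := by
      have := hγ₂.2.2 j (wdist A 1 (h * (g * f))) hj le_rfl
      rwa [hγ₂.2.1, Nat.dist_eq_sub_of_le hj] at this
    have n₃def : wdist A 1 (h * (g * f)) = wl A (h * (g * f)) := wdist_one_left _
    have key1 : wl A (h * (g * f)) ≤ wdist A a (h * (g * f)) := by
      have := hmin (a⁻¹ * h) (mul_mem (inv_mem haH) hh)
      have e : a⁻¹ * h * (g * f) = a⁻¹ * (h * (g * f)) := by group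
      rw [e] at this
      exact this
    have chainA : wdist A a (h * (g * f)) ≤
        wdist A a (γ₁ i) + wdist A (γ₁ i) (γ₂ j) + wdist A (γ₂ j) (h * (g * f)) := by
      have t1 := wdist_triangle hA a (γ₁ i) (h * (g * f))
      have t2 := wdist_triangle hA (γ₁ i) (γ₂ j) (h * (g * f))
      omega
    have hca : wdist A a (γ₁ i) = wdist A (γ₁ i) a := wdist_comm hA _ _
    have lowA : wl A h - i ≤ D + j := by
      have t1 := wdist_triangle hA (γ₁ i) (γ₂ j) 1
      have t2 : wdist A (γ₂ j) 1 = j := by rw [wdist_comm hA]; exact d1j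
      omega
    omega
  · -- Case B : γ₁ i is close to the side from h to h*(g*f)
    have hdBD : wdist A (γ₁ i) (h * σ j) ≤ D := by exact_mod_cast hdB.trans hD
    have hwd2 : wdist A h (h * (g * f)) = wdist A 1 (g * f) := by
      have := wdist_mul_left (A := A) h 1 (g * f)
      rwa [mul_one] at this
    have hj2 : j ≤ wdist A 1 (g * f) := by rwa [hwd2] at hj
    -- distance relations between i and j
    have d1σ : wdist A 1 (σ j) = j := by
      have := hσ.2.2 0 j (Nat.zero_le _) hj2
      rwa [hσ.1, Nat.dist_zero_left] at this
    have dhσ : wdist A h (h * σ j) = j := by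
      have e : wdist A (h * 1) (h * σ j) = wdist A 1 (σ j) := wdist_mul_left h 1 (σ j)
      rw [mul_one] at e
      rw [e, d1σ]
    have hij1 : i ≤ j + D := by
      have t1 := wdist_triangle hA h (h * σ j) (γ₁ i)
      have t2 : wdist A (h * σ j) (γ₁ i) = wdist A (γ₁ i) (h * σ j) := wdist_comm hA _ _
      omega
    have hij2 : j ≤ i + D := by
      have t1 := wdist_triangle hA h (γ₁ i) (h * σ j)
      omega
    -- thinness of the triangle (1, g*f, g) at the point σ j
    rcases hthin 1 (g * f) g σ (fun n => g * ρ' n) τ hσ hρ hτ j hj2 with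
      ⟨j', hj', hd2⟩ | ⟨j', hj', hd1⟩
    · -- Sub-case B2 : σ j is close to the side from g*f to g — produce the data
      have hd2D : wdist A (σ j) (g * ρ' j') ≤ D := by exact_mod_cast hd2.trans hD
      have hwd3 : wdist A (g * f) g = wdist A f 1 := by
        have := wdist_mul_left (A := A) g f 1
        rwa [mul_one] at this
      have hj'2 : j' ≤ wdist A f 1 := by rwa [hwd3] at hj'
      obtain ⟨b, hbF, hbε⟩ := qcF f 1 hf (one_mem F) ρ' hρ' j' hj'2
      have hbE : wdist A (ρ' j') b ≤ E := by exact_mod_cast hbε.trans hEF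
      refine ⟨a, b, a⁻¹ * (h * (g * b)), haH, hbF, ?_, by group, hb1, hb2⟩
      · -- wl A (a⁻¹ * (h * (g * b))) ≤ 2E + 2D
        have : wl A (a⁻¹ * (h * (g * b))) = wdist A a (h * (g * b)) := rfl
        rw [this]
        have t1 := wdist_triangle hA a (γ₁ i) (h * (g * b))
        have t2 := wdist_triangle hA (γ₁ i) (h * σ j) (h * (g * b))
        have t3 := wdist_triangle hA (h * σ j) (h * (g * ρ' j')) (h * (g * b))
        have e1 : wdist A a (γ₁ i) = wdist A (γ₁ i) a := wdist_comm hA _ _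
        have e2 : wdist A (h * σ j) (h * (g * ρ' j')) = wdist A (σ j) (g * ρ' j') := by
          rw [wdist_mul_left]
        have e3 : wdist A (h * (g * ρ' j')) (h * (g * b)) = wdist A (ρ' j') b := by
          rw [← mul_assoc, ← mul_assoc, wdist_mul_left]
        omega
    · -- Sub-case B1 : σ j is close to the side from 1 to g — contradiction
      exfalso
      have hd1D : wdist A (σ j) (τ j') ≤ D := by exact_mod_cast hd1.trans hD
      have d1τ : wdist A 1 (τ j') = j' := by
        have := hτ.2.2 0 j' (Nat.zero_le _) hj'
        rwa [hτ.1, Nat.dist_zero_left] at this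
      have dτg : wdist A (τ j') g = wdist A 1 g - j' := by
        have := hτ.2.2 j' (wdist A 1 g) hj' le_rfl
        rwa [hτ.2.1, Nat.dist_eq_sub_of_le hj'] at this
      have ngdef : wdist A 1 g = wl A g := wdist_one_left g
      have key1 : wl A g ≤ wdist A a (h * g) := by
        have := hg_short (a⁻¹ * h) (mul_mem (inv_mem haH) hh) 1 (one_mem F)
        have e : a⁻¹ * h * g * 1 = a⁻¹ * (h * g) := by group
        rw [e] at this
        exact this
      have chainB : wdist A a (h * g) ≤
          wdist A (γ₁ i) a + wdist A (γ₁ i) (h * σ j) + wdist A (σ j) (τ j')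
            + (wdist A 1 g - j') := by
        have t1 := wdist_triangle hA a (γ₁ i) (h * g)
        have t2 := wdist_triangle hA (γ₁ i) (h * σ j) (h * g)
        have t3 := wdist_triangle hA (h * σ j) (h * τ j') (h * g)
        have e1 : wdist A a (γ₁ i) = wdist A (γ₁ i) a := wdist_comm hA _ _
        have e2 : wdist A (h * σ j) (h * τ j') = wdist A (σ j) (τ j') := by
          rw [wdist_mul_left]
        have e3 : wdist A (h * τ j') (h * g) = wdist A (τ j') g := by
          rw [wdist_mul_left]
        omega
      have hjj' : j ≤ j' + D := by
        have t1 := wdist_triangle hA 1 (τ j') (σ j)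
        have t2 : wdist A (τ j') (σ j) = wdist A (σ j) (τ j') := wdist_comm hA _ _
        omega
      omega

end Main


/-- **Lemma 4.7.** Let `G` be word-hyperbolic with finite generating set `A`, and let
`H, F ≤ G` be quasiconvex subgroups with `F` conjugacy separated from `H` in `G`. Then
there is an integer `K₁ = K₁(H,F,G,A) > 0` such that: whenever `g` is shortest in the
double coset `HgF`, `f ∈ F` is arbitrary, and `h ∈ H` is such that `hgf` is shortest in
the coset `Hgf`, one has `|h|_A ≤ K₁`. -/
theorem wl_le_of_shortest_in_double_coset
    (hG : WordHyperbolic G) (A : Finset G) (hA : Subgroup.closure (A : Set G) = ⊤)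
    (H F : Subgroup G) (hH : QCSubgroup H) (hF : QCSubgroup F)
    (hsep : ConjSeparated H F) :
    ∃ K₁ : ℕ, 0 < K₁ ∧
      ∀ g : G, (∀ h ∈ H, ∀ f ∈ F, wl A g ≤ wl A (h * g * f)) →
        ∀ f ∈ F, ∀ h ∈ H,
          (∀ h' ∈ H, wl A (h * (g * f)) ≤ wl A (h' * (g * f))) →
          wl A h ≤ K₁ := by
  obtain ⟨δ, hδ0, hthin⟩ := hG.2 A hA
  obtain ⟨εH, hεH0, qcH⟩ := hH A hA
  obtain ⟨εF, hεF0, qcF⟩ := hF A hA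
  set D : ℕ := ⌈δ⌉₊ with hDdef
  set E : ℕ := ⌈max εH εF⌉₊ with hEdef
  have hD : δ ≤ (D : ℝ) := Nat.le_ceil δ
  have hEH : εH ≤ (E : ℝ) := le_trans (le_max_left _ _) (Nat.le_ceil _)
  have hEF : εF ≤ (E : ℝ) := le_trans (le_max_right _ _) (Nat.le_ceil _)
  set B : ℕ := (ball_finite hA (2*E+2*D)).toFinset.card with hBdef
  refine ⟨(E+4*D+1) + B*(2*E+1) + (E+2*D+1), by omega, ?_⟩
  intro g hg_short f hf h hh hmin
  by_contra hcon
  push_neg at hcon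
  have claim : ∀ k : Fin (B+1), ∃ x y z : G, x ∈ H ∧ y ∈ F ∧ wl A z ≤ 2*E+2*D ∧
      x * z = h * (g * y) ∧
      wl A h ≤ wl A x + ((E+4*D+1) + (k:ℕ) * (2*E+1)) + E ∧
      wl A x + ((E+4*D+1) + (k:ℕ) * (2*E+1)) ≤ wl A h + E := by
    intro k
    apply main_claim hA hthin qcH qcF hD hEH hEF hg_short hf hh hmin
    · omega
    · have hk : (k : ℕ) ≤ B := Nat.lt_succ_iff.mp k.isLt
      have hmul : (k:ℕ) * (2*E+1) ≤ B * (2*E+1) := Nat.mul_le_mul_right _ hk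
      omega
  choose a b c haH hbF hclen heq hbnd1 hbnd2 using claim
  have hmaps : ∀ k : Fin (B+1), c k ∈ (ball_finite hA (2*E+2*D)).toFinset :=
    fun k => (Set.Finite.mem_toFinset _).mpr (hclen k)
  obtain ⟨k, -, k', -, hkk', hce⟩ :=
    Finset.exists_ne_map_eq_of_card_lt_of_maps_to
      (s := (Finset.univ : Finset (Fin (B+1))))
      (t := (ball_finite hA (2*E+2*D)).toFinset)
      (by rw [Finset.card_univ, Fintype.card_fin]; omega) (fun k _ => hmaps k)
  -- from c k = c k' and conjugacy separation, deduce b k = b k' and a k = a k'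
  have e1 : a k = h * (g * b k) * (c k)⁻¹ := by rw [← heq k]; group
  have e2 : a k' = h * (g * b k') * (c k)⁻¹ := by rw [← heq k', ← hce]; group
  have hconj : (a k')⁻¹ * a k = c k * ((b k')⁻¹ * b k) * (c k)⁻¹ := by
    rw [e1, e2]; group
  have hbone : (b k')⁻¹ * b k = 1 := by
    apply hsep (c k) _ (mul_mem (inv_mem (hbF k')) (hbF k))
    rw [← hconj]
    exact mul_mem (inv_mem (haH k')) (haH k)
  have hbeq : b k = b k' := by
    have := inv_mul_eq_one.mp hbone
    exact this.symm
  have haeq : a k = a k' := by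
    have hck : a k * c k = a k' * c k := by
      rw [heq k, hbeq, ← heq k', ← hce]
    exact mul_right_cancel hck
  -- length contradiction
  have final : ∀ m m' : Fin (B+1), (m:ℕ) < (m':ℕ) → a m = a m' → False := by
    intro m m' hlt heqa
    have h1 := hbnd1 m
    have h2 := hbnd2 m'
    rw [heqa] at h1
    have hxy : (m:ℕ)*(2*E+1) + (2*E+1) ≤ (m':ℕ)*(2*E+1) := by
      have := Nat.mul_le_mul_right (2*E+1) (Nat.succ_le_of_lt hlt)
      rwa [Nat.succ_mul] at this
    generalize hx : (m:ℕ)*(2*E+1) = x at h1 hxy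
    generalize hy : (m':ℕ)*(2*E+1) = y at h2 hxy
    omega
  rcases lt_trichotomy (k:ℕ) (k':ℕ) with hlt | heqv | hlt
  · exact final k k' hlt haeq
  · exact hkk' (Fin.ext heqv)
  · exact final k' k hlt haeq.symm
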